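/- Let A > 0, σ ≥ A, R > 0. There is no λ with 0 < λ < A² satisfying λ = σ·(A + q·coth(qR)) where q = √(A² − λ) > 0. Consequently the first eigenvalue of the problem u'' + 2Au' + λu = 0 on [0,R] with u'(0)=0, u'(R) = −σu(R) satisfies λ₁ ≥ A². -/

import Mathlib

open intervalIntegral MeasureTheory Set

/-- For A > 0, σ ≥ A, R > 0: no λ ∈ (0, A²) satisfies
λ = σ(A + q coth(qR)) with q = √(A²−λ); consequently every eigenvalue of
u'' + 2Au' + λu = 0 on [0,R] with u'(0)=0, u'(R) = −σu(R) satisfies λ ≥ A². -/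
theorem stmt4 (A σ R : ℝ) (hA : 0 < A) (hσ : A ≤ σ) (hR : 0 < R) :
    (¬ ∃ lam : ℝ, 0 < lam ∧ lam < A ^ 2 ∧
        lam = σ * (A + Real.sqrt (A ^ 2 - lam) *
          (Real.cosh (Real.sqrt (A ^ 2 - lam) * R) /
            Real.sinh (Real.sqrt (A ^ 2 - lam) * R)))) ∧
      ∀ (lam : ℝ) (u : ℝ → ℝ), ContDiff ℝ 2 u →
        (∃ x ∈ Set.Icc (0 : ℝ) R, u x ≠ 0) →
        (∀ x ∈ Set.Icc (0 : ℝ) R,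
          deriv (deriv u) x + 2 * A * deriv u x + lam * u x = 0) →
        deriv u 0 = 0 → deriv u R = -σ * u R → A ^ 2 ≤ lam := by
  constructor
  · rintro ⟨lam, hl0, hlA, heq⟩
    set q := Real.sqrt (A ^ 2 - lam) with hq
    have hq0 : 0 < q := Real.sqrt_pos.2 (by linarith)
    have hqR : 0 < q * R := mul_pos hq0 hR
    have hsinh : 0 < Real.sinh (q * R) := Real.sinh_pos_iff.2 hqR
    have hcoth : 1 < Real.cosh (q * R) / Real.sinh (q * R) := by
      rw [lt_div_iff₀ hsinh, one_mul]
      exact Real.sinh_lt_cosh _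
    have h1 : A + q * 1 < A + q * (Real.cosh (q * R) / Real.sinh (q * R)) := by
      have := mul_lt_mul_of_pos_left hcoth hq0
      linarith
    have h2 : A ^ 2 < lam := by
      rw [heq]
      calc A ^ 2 < A * (A + q) := by nlinarith
        _ ≤ σ * (A + q) := by nlinarith
        _ ≤ σ * (A + q * (Real.cosh (q * R) / Real.sinh (q * R))) := by nlinarith
    linarith
  · intro lam u hu hnz hode hbc0 hbcR
    by_contra hcon
    push_neg at hcon
    -- differentiability facts
    have hu2 : ContDiff ℝ (1 + 1) u := by exact_mod_cast hu
    have hu' : ContDiff ℝ 1 (deriv u) := (contDiff_succ_iff_deriv.mp hu2).2.2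
    have hud : Differentiable ℝ u := hu.differentiable (by norm_num)
    have hud' : Differentiable ℝ (deriv u) := hu'.differentiable (by norm_num)
    have hcu'' : Continuous (deriv (deriv u)) := hu'.continuous_deriv le_rfl
    set v : ℝ → ℝ := fun x => Real.exp (A * x) * u x with hv
    set w : ℝ → ℝ := fun x => Real.exp (A * x) * (A * u x + deriv u x) with hw
    set w' : ℝ → ℝ := fun x =>
      Real.exp (A * x) * (A ^ 2 * u x + 2 * A * deriv u x + deriv (deriv u) x) with hw'
    have hexp : ∀ x : ℝ, HasDerivAt (fun x => Real.exp (A * x)) (Real.exp (A * x) * A) x := by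
      intro x
      have := ((hasDerivAt_id x).const_mul A).exp
      simpa using this
    have hdv : ∀ x : ℝ, HasDerivAt v (w x) x := by
      intro x
      have : HasDerivAt (fun x => Real.exp (A * x) * u x)
          (Real.exp (A * x) * A * u x + Real.exp (A * x) * deriv u x) x :=
        (hexp x).mul (hud x).hasDerivAt
      convert this using 1
      simp only [hw]
      ring
    have hdw : ∀ x : ℝ, HasDerivAt w (w' x) x := by
      intro x
      have hin : HasDerivAt (fun x => A * u x + deriv u x)
          (A * deriv u x + deriv (deriv u) x) x :=
        (((hud x).hasDerivAt).const_mul A).add (hud' x).hasDerivAt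
      have : HasDerivAt (fun x => Real.exp (A * x) * (A * u x + deriv u x))
          (Real.exp (A * x) * A * (A * u x + deriv u x) +
            Real.exp (A * x) * (A * deriv u x + deriv (deriv u) x)) x :=
        (hexp x).mul hin
      convert this using 1
      simp only [hw']
      ring
    have hcv : Continuous v := (Real.continuous_exp.comp (continuous_const.mul continuous_id)).mul hud.continuous
    have hcw : Continuous w := (Real.continuous_exp.comp (continuous_const.mul continuous_id)).mul
      ((continuous_const.mul hud.continuous).add hud'.continuous)
    have hcw' : Continuous w' := (Real.continuous_exp.comp (continuous_const.mul continuous_id)).mul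
      (((continuous_const.mul hud.continuous).add (continuous_const.mul hud'.continuous)).add hcu'')
    -- integration by parts
    have hparts : ∫ x in (0:ℝ)..R, v x * w' x
        = v R * w R - v 0 * w 0 - ∫ x in (0:ℝ)..R, w x * w x :=
      integral_mul_deriv_eq_deriv_mul (fun x _ => hdv x) (fun x _ => hdw x)
        (hcw.intervalIntegrable 0 R) (hcw'.intervalIntegrable 0 R)
    -- rewrite LHS using the ODE
    have hLHS : ∫ x in (0:ℝ)..R, v x * w' x
        = ∫ x in (0:ℝ)..R, (A ^ 2 - lam) * (v x) ^ 2 := by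
      apply intervalIntegral.integral_congr
      intro x hx
      rw [Set.uIcc_of_le hR.le] at hx
      have h := hode x hx
      have hdd : deriv (deriv u) x = -(2 * A * deriv u x) - lam * u x := by linarith
      simp only [hv, hw', hdd]
      ring
    have hIc : ∫ x in (0:ℝ)..R, (A ^ 2 - lam) * (v x) ^ 2
        = (A ^ 2 - lam) * ∫ x in (0:ℝ)..R, (v x) ^ 2 :=
      intervalIntegral.integral_const_mul _ _
    -- boundary values
    have hw0 : w 0 = A * v 0 := by simp [hw, hv, hbc0]
    have hwR : w R = (A - σ) * v R := by
      simp only [hw, hv, hbcR]; ring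
    -- positivity of ∫ v²
    obtain ⟨x₀, hx₀, hux₀⟩ := hnz
    have hvx₀ : v x₀ ≠ 0 := by
      simp only [hv]
      exact mul_ne_zero (Real.exp_ne_zero _) hux₀
    have hIv : 0 < ∫ x in (0:ℝ)..R, (v x) ^ 2 := by
      rw [intervalIntegral.integral_pos_iff_support_of_nonneg_ae
        (Filter.Eventually.of_forall fun x => sq_nonneg (v x))
        ((hcv.pow 2).intervalIntegrable 0 R)]
      refine ⟨hR, ?_⟩
      -- find a subinterval where v ≠ 0
      have hopen : IsOpen {x : ℝ | v x ≠ 0} := isOpen_compl_iff.2 (isClosed_eq hcv continuous_const)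
      obtain ⟨δ, hδ, hball⟩ := Metric.isOpen_iff.1 hopen x₀ hvx₀
      set a := max 0 (x₀ - δ / 2) with ha
      set b := min R (x₀ + δ / 2) with hb
      have hab : a < b := by
        rcases hx₀ with ⟨h1, h2⟩
        apply max_lt <;> apply lt_min <;> linarith
      have hsub : Set.Ioo a b ⊆ Function.support (fun x => (v x) ^ 2) ∩ Set.Ioc 0 R := by
        rintro x ⟨hxa, hxb⟩
        constructor
        · have hxball : x ∈ Metric.ball x₀ δ := by
            rw [Real.ball_eq_Ioo]
            constructor
            · have := le_trans (le_max_right 0 (x₀ - δ / 2)) hxa.le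
              linarith
            · have := lt_of_lt_of_le hxb (min_le_right R (x₀ + δ / 2))
              linarith
          have := hball hxball
          simp only [Function.mem_support]
          exact pow_ne_zero 2 this
        · exact ⟨lt_of_le_of_lt (le_max_left 0 _) hxa, le_trans hxb.le (min_le_left R _)⟩
      calc (0 : ENNReal) < volume (Set.Ioo a b) := by
            rw [Real.volume_Ioo]; exact ENNReal.ofReal_pos.2 (by linarith)
        _ ≤ _ := measure_mono hsub
    -- nonnegativity of ∫ w²
    have hIw : 0 ≤ ∫ x in (0:ℝ)..R, w x * w x :=
      intervalIntegral.integral_nonneg hR.le (fun x _ => mul_self_nonneg (w x))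
    -- conclude
    have key : (A ^ 2 - lam) * ∫ x in (0:ℝ)..R, (v x) ^ 2
        = (A - σ) * v R ^ 2 - A * v 0 ^ 2 - ∫ x in (0:ℝ)..R, w x * w x := by
      rw [← hIc, ← hLHS, hparts, hw0, hwR]; ring
    nlinarith [sq_nonneg (v R), sq_nonneg (v 0),
      mul_pos (sub_pos.2 hcon) hIv]
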